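/- For all u, x̃ ∈ H: (1/n) Σ_{k=1}^{n} ‖∇f_k(u) − ∇f_k(x̃) + ∇f(x̃) − ∇f(u)‖² ≤ 2L · ( f(x̃) − f(u) + ⟨∇f(u), u − x̃⟩ ). In other words, the expected squared deviation of the variance-reduced gradient estimator ∇̃f(u) = ∇f_k(u) − ∇f_k(x̃) + ∇f(x̃) (with k uniform on {1,…,n}) from ∇f(u) is at most 2L times the Bregman divergence of f between x̃ and u. -/

import Mathlib

open scoped RealInnerProductSpace

section Aux
variable {H : Type*} [NormedAddCommGroup H] [InnerProductSpace ℝ H]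

lemma line_deriv {g : H → ℝ} {g' : H → H}
    (hg : ∀ x, HasFDerivAt g ((innerSL ℝ (g' x)) : H →L[ℝ] ℝ) x)
    (x d : H) (t : ℝ) :
    HasDerivAt (fun t : ℝ => g (x + t • d)) ⟪g' (x + t • d), d⟫ t := by
  have h1 : HasDerivAt (fun t : ℝ => x + t • d) d t := by
    simpa using ((hasDerivAt_id t).smul_const d).const_add x
  have h2 : HasDerivAt (fun t : ℝ => g (x + t • d)) ((innerSL ℝ (g' (x + t • d))) d) t :=
    (hg (x + t • d)).comp_hasDerivAt t h1
  simpa using h2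

lemma descent_lemma {g : H → ℝ} {g' : H → H} {L : ℝ}
    (hg : ∀ x, HasFDerivAt g ((innerSL ℝ (g' x)) : H →L[ℝ] ℝ) x)
    (hlip : ∀ u v, ‖g' u - g' v‖ ≤ L * ‖u - v‖) (x y : H) :
    g y ≤ g x + ⟪g' x, y - x⟫ + L / 2 * ‖y - x‖ ^ 2 := by
  set d := y - x with hd
  have hcont : Continuous g' := by
    apply (LipschitzWith.of_dist_le_mul (K := L.toNNReal) ?_).continuous
    intro u v
    rw [dist_eq_norm, dist_eq_norm]
    exact (hlip u v).trans (mul_le_mul_of_nonneg_right (Real.le_coe_toNNReal L)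
      (norm_nonneg _))
  have hψc : Continuous fun t : ℝ => ⟪g' (x + t • d), d⟫ :=
    (hcont.comp (continuous_const.add (continuous_id.smul continuous_const))).inner
      continuous_const
  have hftc : g (x + (1:ℝ) • d) - g (x + (0:ℝ) • d)
      = ∫ t in (0:ℝ)..1, ⟪g' (x + t • d), d⟫ := by
    exact (intervalIntegral.integral_eq_sub_of_hasDerivAt
      (fun t _ => line_deriv hg x d t) (hψc.intervalIntegrable 0 1)).symm
  have hmono : (∫ t in (0:ℝ)..1, ⟪g' (x + t • d), d⟫)
      ≤ ∫ t in (0:ℝ)..1, (⟪g' x, d⟫ + L * ‖d‖ ^ 2 * t) := by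
    apply intervalIntegral.integral_mono_on (by norm_num)
      (hψc.intervalIntegrable 0 1)
      ((by fun_prop : Continuous fun t : ℝ => ⟪g' x, d⟫ + L * ‖d‖ ^ 2 * t).intervalIntegrable 0 1)
    intro t ht
    obtain ⟨ht0, ht1⟩ := Set.mem_Icc.mp ht
    have h1 : ⟪g' (x + t • d), d⟫ - ⟪g' x, d⟫ = ⟪g' (x + t • d) - g' x, d⟫ := by
      rw [inner_sub_left]
    have h2 : ⟪g' (x + t • d) - g' x, d⟫ ≤ ‖g' (x + t • d) - g' x‖ * ‖d‖ :=
      real_inner_le_norm _ _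
    have h3 : ‖g' (x + t • d) - g' x‖ ≤ L * (t * ‖d‖) := by
      have := hlip (x + t • d) x
      simpa [norm_smul, abs_of_nonneg ht0] using this
    have h4 := mul_le_mul_of_nonneg_right h3 (norm_nonneg d)
    nlinarith [sq_nonneg ‖d‖]
  have hint : (∫ t in (0:ℝ)..1, (⟪g' x, d⟫ + L * ‖d‖ ^ 2 * t))
      = ⟪g' x, d⟫ + L * ‖d‖ ^ 2 / 2 := by
    rw [intervalIntegral.integral_add (intervalIntegrable_const)
      ((by fun_prop : Continuous fun t : ℝ => L * ‖d‖ ^ 2 * t).intervalIntegrable 0 1),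
      intervalIntegral.integral_const_mul, integral_id]
    simp
    ring
  have hxy : x + (1:ℝ) • d = y := by simp [hd]
  have hx0 : x + (0:ℝ) • d = x := by simp
  rw [hxy, hx0] at hftc
  linarith [hftc, hmono, hint.le, hint.ge]

lemma convex_lb {g : H → ℝ} {g' : H → H}
    (hconv : ConvexOn ℝ Set.univ g)
    (hg : ∀ x, HasFDerivAt g ((innerSL ℝ (g' x)) : H →L[ℝ] ℝ) x) (x y : H) :
    g x + ⟪g' x, y - x⟫ ≤ g y := by
  set d := y - x with hd
  have hφconv : ConvexOn ℝ Set.univ (fun t : ℝ => g (x + t • d)) := by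
    refine ⟨convex_univ, fun s _ t _ a b ha hb hab => ?_⟩
    have h1 : x + (a • s + b • t) • d = a • (x + s • d) + b • (x + t • d) := by
      have : a • (x + s • d) + b • (x + t • d) = (a + b) • x + (a • s + b • t) • d := by
        simp only [smul_add, add_smul, smul_smul, smul_eq_mul]
        abel
      rw [this, hab, one_smul]
    simp only [h1]
    exact hconv.2 (Set.mem_univ _) (Set.mem_univ _) ha hb hab
  have hslope := hφconv.le_slope_of_hasDerivAt (Set.mem_univ (0:ℝ)) (Set.mem_univ (1:ℝ))
    (by norm_num) (line_deriv hg x d 0)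
  simp only [slope_def_field] at hslope
  have h0 : x + (0:ℝ) • d = x := by simp
  have h1 : x + (1:ℝ) • d = y := by simp [hd]
  rw [h0] at hslope
  have : g (x + (1:ℝ) • d) = g y := by rw [h1]
  rw [h1] at hslope
  norm_num at hslope
  linarith

lemma cocoercive {g : H → ℝ} {g' : H → H} {L : ℝ} (hL : 0 < L)
    (hconv : ConvexOn ℝ Set.univ g)
    (hg : ∀ x, HasFDerivAt g ((innerSL ℝ (g' x)) : H →L[ℝ] ℝ) x)
    (hlip : ∀ u v, ‖g' u - g' v‖ ≤ L * ‖u - v‖) (p q : H) :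
    ‖g' p - g' q‖ ^ 2 ≤ 2 * L * (g p - g q - ⟪g' q, p - q⟫) := by
  set h : H → ℝ := fun z => g z - ⟪g' q, z⟫ with hh
  set h' : H → H := fun z => g' z - g' q with hh'
  have hhg : ∀ z, HasFDerivAt h ((innerSL ℝ (h' z)) : H →L[ℝ] ℝ) z := by
    intro z
    have : HasFDerivAt (fun z => g z - ⟪g' q, z⟫) (innerSL ℝ (g' z) - innerSL ℝ (g' q)) z :=
      (hg z).sub ((innerSL ℝ (g' q)).hasFDerivAt (x := z))
    simpa [hh, hh', map_sub] using this
  have hhconv : ConvexOn ℝ Set.univ h := by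
    refine ⟨convex_univ, fun s _ t _ a b ha hb hab => ?_⟩
    have := hconv.2 (Set.mem_univ s) (Set.mem_univ t) ha hb hab
    simp only [hh, smul_eq_mul]
    rw [inner_add_right, real_inner_smul_right, real_inner_smul_right]
    simp only [smul_eq_mul] at this
    linarith
  have hhlip : ∀ u v, ‖h' u - h' v‖ ≤ L * ‖u - v‖ := by
    intro u v
    simpa [hh', sub_sub_sub_cancel_right] using hlip u v
  have hmin : ∀ z, h q ≤ h z := by
    intro z
    have := convex_lb hhconv hhg q z
    simpa [hh', sub_self] using this
  have hdesc := descent_lemma hhg hhlip p (p - (1 / L) • h' p)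
  have hw : p - (1 / L) • h' p - p = -((1/L) • h' p) := by abel
  rw [hw] at hdesc
  have e1 : ⟪h' p, -((1/L) • h' p)⟫ = -(1/L) * ‖h' p‖ ^ 2 := by
    rw [inner_neg_right, real_inner_smul_right, real_inner_self_eq_norm_sq]
    ring
  have e2 : ‖-((1/L) • h' p)‖ ^ 2 = (1/L)^2 * ‖h' p‖ ^ 2 := by
    rw [norm_neg, norm_smul, mul_pow, Real.norm_eq_abs]
    rw [abs_of_nonneg (by positivity : (0:ℝ) ≤ 1/L)]
  rw [e1, e2] at hdesc
  have hq := hmin (p - (1 / L) • h' p)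
  have key : ‖h' p‖ ^ 2 ≤ 2 * L * (h p - h q) := by
    have hL' : L ≠ 0 := ne_of_gt hL
    have h2L : (0:ℝ) < 2 * L := by linarith
    have hd2 := hq.trans hdesc
    have e3 : h p + -(1/L) * ‖h' p‖ ^ 2 + L/2 * ((1/L)^2 * ‖h' p‖ ^ 2)
        = h p - ‖h' p‖ ^ 2 / (2*L) := by field_simp; ring
    rw [e3] at hd2
    have h5 : ‖h' p‖ ^ 2 / (2*L) ≤ h p - h q := by linarith
    have h6 := (div_le_iff₀ h2L).mp h5
    linarith
  have : h p - h q = g p - g q - ⟪g' q, p - q⟫ := by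
    simp only [hh]
    rw [inner_sub_right]
    ring
  rw [this] at key
  simpa [hh'] using key

lemma variance_step {n : ℕ} (hn : 1 ≤ n) (a : Fin n → H) :
    ∑ k, ‖a k - (1 / (n:ℝ)) • ∑ i, a i‖ ^ 2 ≤ ∑ k, ‖a k‖ ^ 2 := by
  set S : H := ∑ i, a i with hS
  set b : H := (1 / (n:ℝ)) • S with hb
  have hn' : (1:ℝ) ≤ n := by exact_mod_cast hn
  have hnpos : (0:ℝ) < n := by linarith
  have hexp : ∀ k, ‖a k - b‖ ^ 2 = ‖a k‖ ^ 2 - 2 * ⟪a k, b⟫ + ‖b‖ ^ 2 :=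
    fun k => norm_sub_sq_real _ _
  have hsum : ∑ k, ‖a k - b‖ ^ 2
      = (∑ k, ‖a k‖ ^ 2) - 2 * ⟪S, b⟫ + n * ‖b‖ ^ 2 := by
    rw [Finset.sum_congr rfl (fun k _ => hexp k)]
    rw [Finset.sum_add_distrib, Finset.sum_sub_distrib, Finset.sum_const,
      Finset.card_univ, Fintype.card_fin, ← Finset.mul_sum, ← sum_inner]
    push_cast
    ring
  have hSb : ⟪S, b⟫ = (1 / (n:ℝ)) * ‖S‖ ^ 2 := by
    rw [hb, real_inner_smul_right, real_inner_self_eq_norm_sq]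
  have hbb : ‖b‖ ^ 2 = (1 / (n:ℝ))^2 * ‖S‖ ^ 2 := by
    rw [hb, norm_smul, mul_pow, Real.norm_eq_abs, abs_of_nonneg (by positivity)]
  rw [hsum, hSb, hbb]
  have h1 : (n:ℝ) * ((1 / (n:ℝ))^2 * ‖S‖ ^ 2) = (1 / (n:ℝ)) * ‖S‖ ^ 2 := by
    field_simp
  rw [h1]
  nlinarith [sq_nonneg ‖S‖, mul_pos hnpos hnpos, sq_nonneg ‖S‖,
    mul_nonneg (le_of_lt (by positivity : (0:ℝ) < 1/(n:ℝ))) (sq_nonneg ‖S‖)]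

end Aux

/-- Variance bound for the SVRG gradient estimator: for all `u, x̃`,
`(1/n) Σ_k ‖∇f_k(u) − ∇f_k(x̃) + ∇f(x̃) − ∇f(u)‖²
  ≤ 2L ( f(x̃) − f(u) + ⟨∇f(u), u − x̃⟩ )`,
where `f = (1/n) Σ f_i` and `∇f = (1/n) Σ ∇f_i`. -/
theorem variance_reduced_gradient_bound
    {H : Type*} [NormedAddCommGroup H] [InnerProductSpace ℝ H]
    (n : ℕ) (hn : 1 ≤ n)
    (fi : Fin n → H → ℝ) (fi' : Fin n → H → H) (L : ℝ)
    (hconv : ∀ i, ConvexOn ℝ Set.univ (fi i))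
    (hgrad : ∀ i u, HasFDerivAt (fi i) ((innerSL ℝ (fi' i u)) : H →L[ℝ] ℝ) u)
    (hlip : ∀ i u v, ‖fi' i u - fi' i v‖ ≤ L * ‖u - v‖) :
    ∀ u xt : H,
      (1 / (n : ℝ)) * ∑ k, ‖fi' k u - fi' k xt
            + (1 / (n : ℝ)) • ∑ i, fi' i xt - (1 / (n : ℝ)) • ∑ i, fi' i u‖ ^ 2
        ≤ 2 * L * ((1 / (n : ℝ)) * ∑ i, fi i xt - (1 / (n : ℝ)) * ∑ i, fi i u
            + ⟪(1 / (n : ℝ)) • ∑ i, fi' i u, u - xt⟫) := by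

  intro u xt
  have hn' : (1:ℝ) ≤ n := by exact_mod_cast hn
  have hninv : (0:ℝ) ≤ 1 / n := by positivity
  by_cases hL : 0 < L
  · -- main case
    set a : Fin n → H := fun k => fi' k u - fi' k xt with ha
    have hrw : ∀ k : Fin n, fi' k u - fi' k xt
          + (1 / (n : ℝ)) • ∑ i, fi' i xt - (1 / (n : ℝ)) • ∑ i, fi' i u
        = a k - (1 / (n:ℝ)) • ∑ i, a i := by
      intro k
      simp only [ha, Finset.sum_sub_distrib, smul_sub]
      abel
    have step1 : ∑ k, ‖fi' k u - fi' k xt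
          + (1 / (n : ℝ)) • ∑ i, fi' i xt - (1 / (n : ℝ)) • ∑ i, fi' i u‖ ^ 2
        ≤ ∑ k, ‖a k‖ ^ 2 := by
      rw [Finset.sum_congr rfl (fun k _ => by rw [hrw k])]
      exact variance_step hn a
    have step2 : ∀ k : Fin n, ‖a k‖ ^ 2
        ≤ 2 * L * (fi k xt - fi k u - ⟪fi' k u, xt - u⟫) := by
      intro k
      have h := cocoercive hL (hconv k) (hgrad k) (hlip k) xt u
      rw [show ‖a k‖ = ‖fi' k xt - fi' k u‖ from norm_sub_rev _ _]
      exact h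
    have step3 : ∑ k, ‖a k‖ ^ 2
        ≤ ∑ k, 2 * L * (fi k xt - fi k u - ⟪fi' k u, xt - u⟫) :=
      Finset.sum_le_sum fun k _ => step2 k
    have hRHS : (1 / (n:ℝ)) * ∑ k, 2 * L * (fi k xt - fi k u - ⟪fi' k u, xt - u⟫)
        = 2 * L * ((1 / (n : ℝ)) * ∑ i, fi i xt - (1 / (n : ℝ)) * ∑ i, fi i u
            + ⟪(1 / (n : ℝ)) • ∑ i, fi' i u, u - xt⟫) := by
      rw [real_inner_smul_left]
      have h1 : (⟪∑ i, fi' i u, u - xt⟫ : ℝ) = ∑ i, ⟪fi' i u, u - xt⟫ :=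
        sum_inner _ _ _
      have h2 : ∀ k : Fin n, (⟪fi' k u, xt - u⟫ : ℝ) = - ⟪fi' k u, u - xt⟫ := by
        intro k
        rw [← neg_sub, inner_neg_right]
      rw [h1, Finset.mul_sum, Finset.mul_sum, Finset.mul_sum, Finset.mul_sum,
        ← Finset.sum_sub_distrib, ← Finset.sum_add_distrib, Finset.mul_sum]
      apply Finset.sum_congr rfl
      intro k _
      rw [h2 k]
      ring
    calc (1 / (n : ℝ)) * ∑ k, ‖fi' k u - fi' k xt
            + (1 / (n : ℝ)) • ∑ i, fi' i xt - (1 / (n : ℝ)) • ∑ i, fi' i u‖ ^ 2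
        ≤ (1 / (n:ℝ)) * ∑ k, ‖a k‖ ^ 2 := mul_le_mul_of_nonneg_left step1 hninv
      _ ≤ (1 / (n:ℝ)) * ∑ k, 2 * L * (fi k xt - fi k u - ⟪fi' k u, xt - u⟫) :=
          mul_le_mul_of_nonneg_left step3 hninv
      _ = _ := hRHS
  · -- L ≤ 0
    have hL0 : L ≤ 0 := le_of_not_gt hL
    by_cases huxt : u = xt
    · subst huxt
      simp [sub_self]
    · have hdpos : 0 < ‖u - xt‖ := by
        rw [norm_pos_iff, sub_ne_zero]; exact huxt
      have i0 : Fin n := ⟨0, hn⟩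
      have hLnn : 0 ≤ L := by
        have h1 := hlip i0 u xt
        have h2 : (0:ℝ) ≤ ‖fi' i0 u - fi' i0 xt‖ := norm_nonneg _
        nlinarith
      have hLeq : L = 0 := le_antisymm hL0 hLnn
      subst hLeq
      have heq : ∀ i : Fin n, fi' i u = fi' i xt := by
        intro i
        have := hlip i u xt
        rw [zero_mul] at this
        rwa [← sub_eq_zero, ← norm_le_zero_iff]
      have hzero : ∀ k : Fin n, fi' k u - fi' k xt
            + (1 / (n : ℝ)) • ∑ i, fi' i xt - (1 / (n : ℝ)) • ∑ i, fi' i u = 0 := by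
        intro k
        rw [heq k, Finset.sum_congr rfl (fun i _ => (heq i))]
        abel
      rw [Finset.sum_congr rfl (fun k _ => by rw [hzero k])]
      simp
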